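/- Let p ≡ 1 (mod 6) be a prime and a ∈ F_p*. Then N_{p,a} ≡ 0 (mod 6) or N_{p,a} ≡ 4 (mod 6), where N_{p,a} is the number of points (with the point at infinity) on y² = x³ + a³ over F_p. -/

import Mathlib

/-- Number of projective points (affine solutions plus the point at infinity)
on the Bachet curve `y² = x³ + a³` over `F_p`. -/
def bachetCount (p : ℕ) [Fact p.Prime] (a : ZMod p) : ℕ :=
  haveI : NeZero p := ⟨(Fact.out : p.Prime).ne_zero⟩
  (Finset.univ.filter (fun P : ZMod p × ZMod p => P.2 ^ 2 = P.1 ^ 3 + a ^ 3)).card + 1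

theorem stmt_4 (p : ℕ) [Fact p.Prime] (hp : p % 6 = 1) (a : ZMod p) (ha : a ≠ 0) :
    bachetCount p a % 6 = 0 ∨ bachetCount p a % 6 = 4 := by
  haveI : NeZero p := ⟨(Fact.out : p.Prime).ne_zero⟩
  have hp7 : 7 ≤ p := by
    have := (Fact.out : p.Prime).two_le
    rcases Nat.lt_or_ge p 7 with h | h
    · interval_cases p <;> omega
    · exact h
  -- a primitive cube root of unity
  have hcard : Fintype.card (ZMod p)ˣ = p - 1 := by
    rw [ZMod.card_units_eq_totient, Nat.totient_prime Fact.out]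
  have h3dvd : 3 ∣ Fintype.card (ZMod p)ˣ := by rw [hcard]; omega
  haveI : Fact (Nat.Prime 3) := ⟨by norm_num⟩
  obtain ⟨u, hu⟩ := exists_prime_orderOf_dvd_card (G := (ZMod p)ˣ) 3 h3dvd
  set ζ : ZMod p := ((u : (ZMod p)ˣ) : ZMod p) with hζdef
  have hζ3 : ζ ^ 3 = 1 := by
    have : u ^ 3 = 1 := by rw [← hu]; exact pow_orderOf_eq_one u
    have := congrArg (Units.val) this
    push_cast at this
    simpa [hζdef] using this
  have hζ1 : ζ ≠ 1 := by
    intro h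
    have : u = 1 := Units.ext (by simpa [hζdef] using h)
    rw [this, orderOf_one] at hu; omega
  have hζ2 : ζ ^ 2 ≠ 1 := by
    intro h
    exact hζ1 (by calc ζ = ζ * ζ ^ 2 := by rw [h, mul_one]
      _ = 1 := by rw [← pow_succ']; exact hζ3)
  have hζ0 : ζ ≠ 0 := by
    intro h; rw [h] at hζ3; simp at hζ3
  have hs : ζ ^ 2 + ζ + 1 = 0 := by
    have h0 : (ζ - 1) * (ζ ^ 2 + ζ + 1) = 0 := by linear_combination hζ3
    rcases mul_eq_zero.mp h0 with h | h
    · exact absurd (sub_eq_zero.mp h) hζ1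
    · exact h
  -- two is nonzero
  have h2ne : (2 : ZMod p) ≠ 0 := by
    have : ((2 : ℕ) : ZMod p) ≠ 0 := by
      rw [Ne, ZMod.natCast_eq_zero_iff]
      intro h
      have := Nat.le_of_dvd (by norm_num) h
      omega
    simpa using this
  -- cube roots of a nonzero cube: exactly 3
  have cube3 : ∀ b : ZMod p, b ≠ 0 →
      (Finset.univ.filter fun x : ZMod p => x ^ 3 = b ^ 3).card = 3 := by
    intro b hb
    have hset : (Finset.univ.filter fun x : ZMod p => x ^ 3 = b ^ 3) = {b, ζ * b, ζ ^ 2 * b} := by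
      ext x
      simp only [Finset.mem_filter, Finset.mem_univ, true_and, Finset.mem_insert,
        Finset.mem_singleton]
      constructor
      · intro hx
        have h0 : (x - b) * (x - ζ * b) * (x - ζ ^ 2 * b) = 0 := by
          linear_combination hx - b * x ^ 2 * hs + (b ^ 2 * x) * hs + (b ^ 2 * x) * hζ3
            - b ^ 3 * hζ3
        rcases mul_eq_zero.mp h0 with h0 | h0
        · rcases mul_eq_zero.mp h0 with h0 | h0
          · exact Or.inl (sub_eq_zero.mp h0)
          · exact Or.inr (Or.inl (sub_eq_zero.mp h0))
        · exact Or.inr (Or.inr (sub_eq_zero.mp h0))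
      · rintro (rfl | rfl | rfl)
        · rfl
        · rw [mul_pow, hζ3, one_mul]
        · rw [mul_pow, ← pow_mul, show 2 * 3 = 3 * 2 by rfl, pow_mul, hζ3, one_pow, one_mul]
    rw [hset]
    have h1 : b ≠ ζ * b := fun h => hζ1 (mul_right_cancel₀ hb (by rw [one_mul, ← h]))
    have h2 : b ≠ ζ ^ 2 * b := fun h => hζ2 (mul_right_cancel₀ hb (by rw [one_mul, ← h]))
    have h3 : ζ * b ≠ ζ ^ 2 * b := fun h => by
      have hzz : ζ = ζ ^ 2 := mul_right_cancel₀ hb h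
      exact hζ1 (mul_left_cancel₀ hζ0 (by rw [mul_one, ← pow_two, ← hzz]))
    rw [Finset.card_insert_of_notMem (by simp [h1, h2]),
      Finset.card_insert_of_notMem (by simp [h3]), Finset.card_singleton]
  -- cube-root fibers have cardinality divisible by 3 when the target is nonzero
  have cubeDvd : ∀ c : ZMod p, c ≠ 0 →
      (Finset.univ.filter fun x : ZMod p => x ^ 3 = c).card % 3 = 0 := by
    intro c hc
    by_cases hex : ∃ b : ZMod p, b ^ 3 = c
    · obtain ⟨b, rfl⟩ := hex
      have hb : b ≠ 0 := fun h => hc (by rw [h]; ring)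
      rw [cube3 b hb]
    · have : (Finset.univ.filter fun x : ZMod p => x ^ 3 = c) = ∅ := by
        ext x; simp only [Finset.mem_filter, Finset.mem_univ, true_and, Finset.notMem_empty,
          iff_false]
        exact fun h => hex ⟨x, h⟩
      rw [this, Finset.card_empty]
  -- square-root fibers: 0 or 2 elements when target nonzero
  have sq02 : ∀ c : ZMod p, c ≠ 0 →
      (Finset.univ.filter fun y : ZMod p => y ^ 2 = c).card = 0 ∨
      (Finset.univ.filter fun y : ZMod p => y ^ 2 = c).card = 2 := by
    intro c hc
    by_cases hex : ∃ b : ZMod p, b ^ 2 = c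
    · obtain ⟨b, rfl⟩ := hex
      have hb : b ≠ 0 := fun h => hc (by rw [h]; ring)
      right
      have hset : (Finset.univ.filter fun y : ZMod p => y ^ 2 = b ^ 2) = {b, -b} := by
        ext y
        simp only [Finset.mem_filter, Finset.mem_univ, true_and, Finset.mem_insert,
          Finset.mem_singleton]
        constructor
        · intro hy
          have h0 : (y - b) * (y + b) = 0 := by linear_combination hy
          rcases mul_eq_zero.mp h0 with h0 | h0
          · exact Or.inl (sub_eq_zero.mp h0)
          · exact Or.inr (eq_neg_of_add_eq_zero_left h0)
        · rintro (rfl | rfl) <;> ring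
      rw [hset, Finset.card_insert_of_notMem (by
        simp only [Finset.mem_singleton]
        intro h
        apply hb
        have : (2 : ZMod p) * b = 0 := by linear_combination h
        exact (mul_eq_zero.mp this).resolve_left h2ne), Finset.card_singleton]
    · left
      have : (Finset.univ.filter fun y : ZMod p => y ^ 2 = c) = ∅ := by
        ext y; simp only [Finset.mem_filter, Finset.mem_univ, true_and, Finset.notMem_empty,
          iff_false]
        exact fun h => hex ⟨y, h⟩
      rw [this, Finset.card_empty]
  -- cube fiber at zero
  have cube0 : (Finset.univ.filter fun x : ZMod p => x ^ 3 = (0 : ZMod p)).card = 1 := by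
    have : (Finset.univ.filter fun x : ZMod p => x ^ 3 = (0 : ZMod p)) = {0} := by
      ext x; simp [pow_eq_zero_iff]
    rw [this, Finset.card_singleton]
  -- square fiber at zero
  have sq0 : (Finset.univ.filter fun y : ZMod p => y ^ 2 = (0 : ZMod p)).card = 1 := by
    have : (Finset.univ.filter fun y : ZMod p => y ^ 2 = (0 : ZMod p)) = {0} := by
      ext y; simp [pow_eq_zero_iff]
    rw [this, Finset.card_singleton]
  set S := Finset.univ.filter (fun P : ZMod p × ZMod p => P.2 ^ 2 = P.1 ^ 3 + a ^ 3) with hS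
  -- fiber over x
  have hsum1 : S.card = ∑ x : ZMod p, (Finset.univ.filter fun y : ZMod p => y ^ 2 = x ^ 3 + a ^ 3).card := by
    rw [Finset.card_eq_sum_card_fiberwise (f := Prod.fst) (t := Finset.univ)
      (fun _ _ => Finset.mem_univ _)]
    refine Finset.sum_congr rfl fun x _ => ?_
    refine Finset.card_nbij' (fun P => P.2) (fun y => (x, y)) ?_ ?_ ?_ ?_
    · rintro ⟨x', y⟩ hP
      simp only [hS, Finset.mem_coe, Finset.mem_filter, Finset.mem_univ, true_and] at hP ⊢
      obtain ⟨h1, h2⟩ := hP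
      subst h2; exact h1
    · intro y hy
      simp only [hS, Finset.mem_coe, Finset.mem_filter, Finset.mem_univ, true_and] at hy ⊢
      exact ⟨hy, trivial⟩
    · rintro ⟨x', y⟩ hP
      simp only [hS, Finset.mem_coe, Finset.mem_filter, Finset.mem_univ, true_and] at hP
      simp [hP.2]
    · intro y hy; rfl
  -- fiber over y
  have hsum2 : S.card = ∑ y : ZMod p, (Finset.univ.filter fun x : ZMod p => x ^ 3 = y ^ 2 - a ^ 3).card := by
    rw [Finset.card_eq_sum_card_fiberwise (f := Prod.snd) (t := Finset.univ)
      (fun _ _ => Finset.mem_univ _)]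
    refine Finset.sum_congr rfl fun y _ => ?_
    refine Finset.card_nbij' (fun P => P.1) (fun x => (x, y)) ?_ ?_ ?_ ?_
    · rintro ⟨x, y'⟩ hP
      simp only [hS, Finset.mem_coe, Finset.mem_filter, Finset.mem_univ, true_and] at hP ⊢
      obtain ⟨h1, h2⟩ := hP
      subst h2
      linear_combination -h1
    · intro x hx
      simp only [hS, Finset.mem_coe, Finset.mem_filter, Finset.mem_univ, true_and] at hx ⊢
      exact ⟨by linear_combination -hx, trivial⟩
    · rintro ⟨x, y'⟩ hP
      simp only [hS, Finset.mem_coe, Finset.mem_filter, Finset.mem_univ, true_and] at hP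
      simp [hP.2]
    · intro x hx; rfl
  -- parity of S.card
  have hmod2 : S.card % 2 = 1 := by
    rw [hsum1, Finset.sum_nat_mod]
    have : ∀ x : ZMod p, (Finset.univ.filter fun y : ZMod p => y ^ 2 = x ^ 3 + a ^ 3).card % 2
        = if x ^ 3 = -(a ^ 3) then 1 else 0 := by
      intro x
      by_cases hx : x ^ 3 + a ^ 3 = 0
      · have hx' : x ^ 3 = -(a ^ 3) := by linear_combination hx
        rw [if_pos hx']
        have heq : (Finset.univ.filter fun y : ZMod p => y ^ 2 = x ^ 3 + a ^ 3)
            = Finset.univ.filter fun y : ZMod p => y ^ 2 = (0 : ZMod p) :=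
          Finset.filter_congr (fun y _ => by rw [hx])
        rw [heq, sq0]
      · have hx' : ¬ x ^ 3 = -(a ^ 3) := fun h => hx (by linear_combination h)
        rw [if_neg hx']
        rcases sq02 _ hx with h | h <;> rw [h]
    rw [Finset.sum_congr rfl (fun x _ => this x), ← Finset.card_filter]
    have hfe : (Finset.univ.filter fun x : ZMod p => x ^ 3 = -(a ^ 3))
        = Finset.univ.filter fun x : ZMod p => x ^ 3 = (-a) ^ 3 := by
      apply Finset.filter_congr
      intro x _
      constructor
      · intro h; rw [h]; ring
      · intro h; rw [h]; ring
    rw [hfe, cube3 (-a) (neg_ne_zero.mpr ha)]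
  -- S.card mod 3
  have hmod3 : S.card % 3 = 0 ∨ S.card % 3 = 2 := by
    have ha3 : a ^ 3 ≠ 0 := pow_ne_zero 3 ha
    have key : ∀ y : ZMod p, (Finset.univ.filter fun x : ZMod p => x ^ 3 = y ^ 2 - a ^ 3).card % 3
        = if y ^ 2 = a ^ 3 then 1 else 0 := by
      intro y
      by_cases hy : y ^ 2 - a ^ 3 = 0
      · have hy' : y ^ 2 = a ^ 3 := by linear_combination hy
        rw [if_pos hy']
        have heq : (Finset.univ.filter fun x : ZMod p => x ^ 3 = y ^ 2 - a ^ 3)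
            = Finset.univ.filter fun x : ZMod p => x ^ 3 = (0 : ZMod p) :=
          Finset.filter_congr (fun x _ => by rw [hy])
        rw [heq, cube0]
      · have hy' : ¬ y ^ 2 = a ^ 3 := fun h => hy (by rw [h]; ring)
        rw [if_neg hy']
        exact cubeDvd _ hy
    have : S.card % 3 = (Finset.univ.filter fun y : ZMod p => y ^ 2 = a ^ 3).card % 3 := by
      rw [hsum2, Finset.sum_nat_mod, Finset.sum_congr rfl (fun y _ => key y),
        ← Finset.card_filter]
    rw [this]
    rcases sq02 _ ha3 with h | h <;> rw [h]
    · left; rfl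
    · right; rfl
  have hbc : bachetCount p a = S.card + 1 := rfl
  rw [hbc]
  omega
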